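/- Let F be a distribution on ℝ with E|X| = ∞ satisfying condition (Hb): ∫_{x₀}^∞ H(x)/A²(x) dx < ∞ for some x₀ > 0, where A is eventually positive with limsup A = ∞. Then ∫ₓ^∞ K(t)/A²(t) dt = 1/A(x) for all large x; in particular A(x) → ∞ as x → ∞. -/

import Mathlib

open MeasureTheory Filter Set Asymptotics Topology

/-- Tail of a distribution: `1 - F(x) = P[X > x]`. -/
noncomputable def tailF (μ : Measure ℝ) (x : ℝ) : ℝ := (μ (Set.Ioi x)).toReal

/-- A function is slowly varying at infinity. -/
def SlowlyVarying (f : ℝ → ℝ) : Prop :=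
  (∀ᶠ x in atTop, 0 < f x) ∧
    ∀ c : ℝ, 1 < c → Tendsto (fun x => f (c * x) / f x) atTop (𝓝 1)

/-- Two-sided tail `H(x) = P[|X| > x] = 1 - F(x) + F(-x-0)`. -/
noncomputable def Hf (μ : Measure ℝ) (x : ℝ) : ℝ := (μ {y : ℝ | x < |y|}).toReal

/-- `K(x) = P[X > x] - P[X < -x] = 1 - F(x) - F(-x-0)`. -/
noncomputable def Kf (μ : Measure ℝ) (x : ℝ) : ℝ :=
  (μ (Set.Ioi x)).toReal - (μ (Set.Iio (-x))).toReal

/-- `A(x) = ∫₀ˣ K(t) dt`. -/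
noncomputable def Af (μ : Measure ℝ) (x : ℝ) : ℝ := ∫ t in (0:ℝ)..x, Kf μ t

/-- `ℓ(x) = ∫₀ˣ H(t) dt`. -/
noncomputable def ellH (μ : Measure ℝ) (x : ℝ) : ℝ := ∫ t in (0:ℝ)..x, Hf μ t

/-- `m(x)`, defined by `1/m(x) = ∫ₓ^∞ H(t)/A²(t) dt`. -/
noncomputable def mF (μ : Measure ℝ) (x : ℝ) : ℝ :=
  (∫ t in Set.Ioi x, Hf μ t / (Af μ t) ^ 2)⁻¹

/-- `r₊(x) = ∫ₓ^∞ (1-F(t))/A²(t) dt`. -/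
noncomputable def rPlus (μ : Measure ℝ) (x : ℝ) : ℝ :=
  ∫ t in Set.Ioi x, tailF μ t / (Af μ t) ^ 2

/-- `r₋(x) = ∫ₓ^∞ F(-t)/A²(t) dt`. -/
noncomputable def rMinus (μ : Measure ℝ) (x : ℝ) : ℝ :=
  ∫ t in Set.Ioi x, (μ (Set.Iio (-t))).toReal / (Af μ t) ^ 2

/-- Condition (Ha): `A(x)/(x H(x)) → ∞`, i.e. positive relative stability. -/
def HaCond (μ : Measure ℝ) : Prop :=
  Tendsto (fun x => Af μ x / (x * Hf μ x)) atTop atTop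

/-- Condition (Hb): `∫_{x₀}^∞ H(x)/A²(x) dx < ∞` for some `x₀ > 0`
with `A` positive on `[x₀, ∞)`. -/
def HbCond (μ : Measure ℝ) : Prop :=
  ∃ x₀ : ℝ, 0 < x₀ ∧ (∀ x ≥ x₀, 0 < Af μ x) ∧
    IntegrableOn (fun x => Hf μ x / (Af μ x) ^ 2) (Set.Ioi x₀)

/-- `X` is arithmetic: `X/h ∈ ℤ` almost surely for some `h > 0`. -/
def IsArith (μ : Measure ℝ) : Prop :=
  ∃ h : ℝ, 0 < h ∧ μ {x : ℝ | ∃ n : ℤ, x = n * h} = 1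

/-- Characteristic function `φ(θ) = E[e^{iθX}]`. -/
noncomputable def charF (μ : Measure ℝ) (θ : ℝ) : ℂ :=
  ∫ x, Complex.exp (Complex.I * θ * x) ∂μ

/- ### Auxiliary lemmas -/

/-- An antitone function that is sequentially right-continuous at `t` is
right-continuous at `t`. -/
lemma rc_of_antitone {g : ℝ → ℝ} (hg : Antitone g) (t : ℝ)
    (h : Tendsto (fun n : ℕ => g (t + 1 / (n + 1))) atTop (𝓝 (g t))) :
    ContinuousWithinAt g (Ici t) t := by
  rw [ContinuousWithinAt, Metric.tendsto_nhdsWithin_nhds]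
  intro ε hε
  obtain ⟨n, hn⟩ := (h.eventually (Metric.ball_mem_nhds (g t) hε)).exists
  have hδ : (0:ℝ) < 1 / ((n:ℝ) + 1) := by positivity
  refine ⟨1 / ((n:ℝ) + 1), hδ, fun {s} hs hdist => ?_⟩
  rw [Real.dist_eq] at hdist
  have hst : s - t < 1 / ((n:ℝ) + 1) := (abs_lt.1 hdist).2
  have h1 : g (t + 1 / ((n:ℝ) + 1)) ≤ g s := hg (by linarith)
  have h2 : g s ≤ g t := hg hs
  rw [Real.dist_eq] at hn
  have hn' : |g (t + 1 / ((n:ℝ) + 1)) - g t| < ε := hn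
  have hn'' := abs_lt.1 hn'
  rw [Real.dist_eq, abs_lt]
  constructor <;> linarith [hn''.1]

lemma antitoneIoiToReal (μ : Measure ℝ) [IsProbabilityMeasure μ] :
    Antitone (fun x : ℝ => (μ (Ioi x)).toReal) := fun a b hab =>
  ENNReal.toReal_mono (measure_ne_top μ _) (measure_mono (Ioi_subset_Ioi hab))

lemma antitoneIioToReal (μ : Measure ℝ) [IsProbabilityMeasure μ] :
    Antitone (fun x : ℝ => (μ (Iio (-x))).toReal) := fun a b hab =>
  ENNReal.toReal_mono (measure_ne_top μ _)
    (measure_mono (Iio_subset_Iio (by linarith)))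

lemma tendsto_toReal_Ioi (μ : Measure ℝ) [IsProbabilityMeasure μ] (t : ℝ) :
    Tendsto (fun n : ℕ => (μ (Ioi (t + 1 / (n + 1)))).toReal) atTop
      (𝓝 ((μ (Ioi t)).toReal)) := by
  have hm : Monotone (fun n : ℕ => Ioi (t + 1 / ((n:ℝ) + 1))) := by
    intro n m hnm
    apply Ioi_subset_Ioi
    have : (1:ℝ) / ((m:ℝ) + 1) ≤ 1 / ((n:ℝ) + 1) := by
      apply one_div_le_one_div_of_le (by positivity)
      exact_mod_cast Nat.succ_le_succ hnm
    linarith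
  have hu : (⋃ n : ℕ, Ioi (t + 1 / ((n:ℝ) + 1))) = Ioi t := by
    ext y
    simp only [mem_iUnion, mem_Ioi]
    constructor
    · rintro ⟨n, hn⟩
      have : (0:ℝ) < 1 / ((n:ℝ) + 1) := by positivity
      linarith
    · intro hy
      obtain ⟨n, hn⟩ := exists_nat_one_div_lt (sub_pos.2 hy)
      exact ⟨n, by linarith⟩
  have h := tendsto_measure_iUnion_atTop (μ := μ) hm
  rw [hu] at h
  exact (ENNReal.tendsto_toReal (measure_ne_top μ _)).comp h

lemma tendsto_toReal_Iio (μ : Measure ℝ) [IsProbabilityMeasure μ] (t : ℝ) :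
    Tendsto (fun n : ℕ => (μ (Iio (-(t + 1 / (n + 1))))).toReal) atTop
      (𝓝 ((μ (Iio (-t))).toReal)) := by
  have hm : Monotone (fun n : ℕ => Iio (-(t + 1 / ((n:ℝ) + 1)))) := by
    intro n m hnm
    apply Iio_subset_Iio
    have : (1:ℝ) / ((m:ℝ) + 1) ≤ 1 / ((n:ℝ) + 1) := by
      apply one_div_le_one_div_of_le (by positivity)
      exact_mod_cast Nat.succ_le_succ hnm
    linarith
  have hu : (⋃ n : ℕ, Iio (-(t + 1 / ((n:ℝ) + 1)))) = Iio (-t) := by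
    ext y
    simp only [mem_iUnion, mem_Iio]
    constructor
    · rintro ⟨n, hn⟩
      have : (0:ℝ) < 1 / ((n:ℝ) + 1) := by positivity
      linarith
    · intro hy
      obtain ⟨n, hn⟩ := exists_nat_one_div_lt (sub_pos.2 hy)
      exact ⟨n, by linarith⟩
  have h := tendsto_measure_iUnion_atTop (μ := μ) hm
  rw [hu] at h
  exact (ENNReal.tendsto_toReal (measure_ne_top μ _)).comp h

lemma Kf_rightContinuous (μ : Measure ℝ) [IsProbabilityMeasure μ] (t : ℝ) :
    ContinuousWithinAt (Kf μ) (Ici t) t := by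
  have h1 : ContinuousWithinAt (fun x : ℝ => (μ (Ioi x)).toReal) (Ici t) t :=
    rc_of_antitone (antitoneIoiToReal μ) t (tendsto_toReal_Ioi μ t)
  have h2 : ContinuousWithinAt (fun x : ℝ => (μ (Iio (-x))).toReal) (Ici t) t :=
    rc_of_antitone (antitoneIioToReal μ) t (tendsto_toReal_Iio μ t)
  exact h1.sub h2

lemma measurable_Kf (μ : Measure ℝ) [IsProbabilityMeasure μ] : Measurable (Kf μ) :=
  ((antitoneIoiToReal μ).measurable).sub ((antitoneIioToReal μ).measurable)

lemma intervalIntegrable_Kf (μ : Measure ℝ) [IsProbabilityMeasure μ] (a b : ℝ) :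
    IntervalIntegrable (Kf μ) volume a b :=
  ((antitoneIoiToReal μ).intervalIntegrable).sub ((antitoneIioToReal μ).intervalIntegrable)

lemma continuous_Af (μ : Measure ℝ) [IsProbabilityMeasure μ] : Continuous (Af μ) :=
  intervalIntegral.continuous_primitive (fun a b => intervalIntegrable_Kf μ a b) 0

lemma abs_Kf_le_Hf (μ : Measure ℝ) [IsProbabilityMeasure μ] {t : ℝ} (ht : 0 ≤ t) :
    |Kf μ t| ≤ Hf μ t := by
  have hset : {y : ℝ | t < |y|} = Iio (-t) ∪ Ioi t := by
    ext y
    simp only [mem_setOf_eq, mem_union, mem_Iio, mem_Ioi, lt_abs]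
    constructor
    · rintro (h | h)
      · exact Or.inr h
      · exact Or.inl (by linarith)
    · rintro (h | h)
      · exact Or.inr (by linarith)
      · exact Or.inl h
  have hdisj : Disjoint (Iio (-t)) (Ioi t) := by
    rw [Set.disjoint_left]
    intro y hy1 hy2
    simp only [mem_Iio] at hy1
    simp only [mem_Ioi] at hy2
    linarith
  have hH : Hf μ t = (μ (Iio (-t))).toReal + (μ (Ioi t)).toReal := by
    rw [Hf, hset, measure_union hdisj measurableSet_Ioi,
      ENNReal.toReal_add (measure_ne_top μ _) (measure_ne_top μ _)]
  have ha : 0 ≤ (μ (Ioi t)).toReal := ENNReal.toReal_nonneg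
  have hb : 0 ≤ (μ (Iio (-t))).toReal := ENNReal.toReal_nonneg
  rw [Kf, hH, abs_le]
  constructor <;> linarith

lemma integrableOn_KA (μ : Measure ℝ) [IsProbabilityMeasure μ] {x₀ : ℝ} (hx₀ : 0 < x₀)
    (hint : IntegrableOn (fun x => Hf μ x / (Af μ x) ^ 2) (Set.Ioi x₀)) :
    IntegrableOn (fun t => Kf μ t / (Af μ t) ^ 2) (Set.Ioi x₀) := by
  apply Integrable.mono' hint
  · exact ((measurable_Kf μ).div
      (((continuous_Af μ).measurable).pow_const 2)).aestronglyMeasurable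
  · rw [ae_restrict_iff' measurableSet_Ioi]
    filter_upwards with t ht
    have ht0 : (0:ℝ) ≤ t := le_of_lt (lt_trans hx₀ ht)
    have h1 : |Kf μ t| ≤ Hf μ t := abs_Kf_le_Hf μ ht0
    have h2 : (0:ℝ) ≤ (Af μ t) ^ 2 := sq_nonneg _
    rw [Real.norm_eq_abs, abs_div, abs_of_nonneg h2]
    exact div_le_div_of_nonneg_right h1 h2

lemma hasDeriv_invAf (μ : Measure ℝ) [IsProbabilityMeasure μ] {x₀ : ℝ}
    (hpos : ∀ x ≥ x₀, 0 < Af μ x) {t : ℝ} (ht : x₀ ≤ t) :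
    HasDerivWithinAt (fun u => (Af μ u)⁻¹) (-(Kf μ t) / (Af μ t) ^ 2) (Ici t) t := by
  have hA : HasDerivWithinAt (Af μ) (Kf μ t) (Ici t) t := by
    unfold Af
    exact intervalIntegral.integral_hasDerivWithinAt_right (intervalIntegrable_Kf μ 0 t)
      (measurable_Kf μ).stronglyMeasurable.stronglyMeasurableAtFilter
      ((Kf_rightContinuous μ t).mono Ioi_subset_Ici_self)
  exact hA.inv (ne_of_gt (hpos t ht))

lemma key_interval (μ : Measure ℝ) [IsProbabilityMeasure μ] {x₀ : ℝ} (hx₀ : 0 < x₀)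
    (hpos : ∀ x ≥ x₀, 0 < Af μ x)
    (hint : IntegrableOn (fun x => Hf μ x / (Af μ x) ^ 2) (Set.Ioi x₀))
    {x y : ℝ} (hx : x₀ ≤ x) (hxy : x ≤ y) :
    ∫ t in x..y, Kf μ t / (Af μ t) ^ 2 = (Af μ x)⁻¹ - (Af μ y)⁻¹ := by
  have hcont : ContinuousOn (fun u => (Af μ u)⁻¹) (Icc x y) := by
    apply ContinuousOn.inv₀ (continuous_Af μ).continuousOn
    intro t ht
    exact ne_of_gt (hpos t (le_trans hx ht.1))
  have hderiv : ∀ t ∈ Ioo x y,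
      HasDerivWithinAt (fun u => (Af μ u)⁻¹) (-(Kf μ t) / (Af μ t) ^ 2) (Ioi t) t :=
    fun t ht => (hasDeriv_invAf μ hpos (le_trans hx ht.1.le)).mono Ioi_subset_Ici_self
  have hii : IntervalIntegrable (fun t => -(Kf μ t) / (Af μ t) ^ 2) volume x y := by
    rw [intervalIntegrable_iff_integrableOn_Ioc_of_le hxy]
    have h := (integrableOn_KA μ hx₀ hint).mono_set
      (fun t (ht : t ∈ Ioc x y) => lt_of_le_of_lt hx ht.1)
    have h2 : (fun t => -(Kf μ t) / (Af μ t) ^ 2)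
        = fun t => -(Kf μ t / (Af μ t) ^ 2) := by funext t; ring
    rw [h2]
    exact h.neg
  have hFTC := intervalIntegral.integral_eq_sub_of_hasDeriv_right_of_le hxy hcont hderiv hii
  have h2 : ∫ t in x..y, Kf μ t / (Af μ t) ^ 2
      = -∫ t in x..y, -(Kf μ t) / (Af μ t) ^ 2 := by
    rw [← intervalIntegral.integral_neg]
    congr 1
    funext t
    ring
  rw [h2, hFTC]
  ring

theorem stmt9 (μ : Measure ℝ) [IsProbabilityMeasure μ]
    (hmean : ∫⁻ x, ENNReal.ofReal |x| ∂μ = ⊤)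
    (hHb : HbCond μ)
    (hlimsup : ∀ c : ℝ, ∃ᶠ x in atTop, c < Af μ x) :
    (∀ᶠ x in atTop, (∫ t in Set.Ioi x, Kf μ t / (Af μ t) ^ 2) = 1 / Af μ x) ∧
    Tendsto (Af μ) atTop atTop := by
  obtain ⟨x₀, hx₀, hpos, hint⟩ := hHb
  have hIK : IntegrableOn (fun t => Kf μ t / (Af μ t) ^ 2) (Set.Ioi x₀) :=
    integrableOn_KA μ hx₀ hint
  -- for each x ≥ x₀, `(Af y)⁻¹` tends to `(Af x)⁻¹ - ∫_{Ioi x} K/A²`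
  have htinv : ∀ x, x₀ ≤ x → Tendsto (fun y => (Af μ y)⁻¹) atTop
      (𝓝 ((Af μ x)⁻¹ - ∫ t in Set.Ioi x, Kf μ t / (Af μ t) ^ 2)) := by
    intro x hx
    have h1 : Tendsto (fun y => ∫ t in x..y, Kf μ t / (Af μ t) ^ 2) atTop
        (𝓝 (∫ t in Set.Ioi x, Kf μ t / (Af μ t) ^ 2)) :=
      MeasureTheory.intervalIntegral_tendsto_integral_Ioi x
        (hIK.mono_set (Ioi_subset_Ioi hx)) tendsto_id
    have h2 : Tendsto (fun y => (Af μ x)⁻¹ - (Af μ y)⁻¹) atTop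
        (𝓝 (∫ t in Set.Ioi x, Kf μ t / (Af μ t) ^ 2)) := by
      apply h1.congr'
      filter_upwards [eventually_ge_atTop x] with y hy
      exact key_interval μ hx₀ hpos hint hx hy
    have h3 := (tendsto_const_nhds (x := (Af μ x)⁻¹) (f := atTop)).sub h2
    simpa using h3
  set L : ℝ := (Af μ x₀)⁻¹ - ∫ t in Set.Ioi x₀, Kf μ t / (Af μ t) ^ 2 with hLdef
  clear_value L
  have hLlim : Tendsto (fun y => (Af μ y)⁻¹) atTop (𝓝 L) := hLdef ▸ htinv x₀ le_rfl
  have hL0 : L = 0 := by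
    have hLge : 0 ≤ L := by
      apply ge_of_tendsto hLlim
      filter_upwards [eventually_ge_atTop x₀] with y hy
      exact inv_nonneg.2 (hpos y hy).le
    have hLle : ∀ c : ℝ, 0 < c → L ≤ c⁻¹ := by
      intro c hc
      by_contra hcon
      push_neg at hcon
      have hev : ∀ᶠ y in atTop, c⁻¹ < (Af μ y)⁻¹ := hLlim.eventually_const_lt hcon
      obtain ⟨y, hy1, hy2⟩ := ((hlimsup c).and_eventually hev).exists
      have : (Af μ y)⁻¹ < c⁻¹ := by
        apply inv_strictAnti₀ hc hy1
      linarith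
    by_contra hne
    have hLpos : 0 < L := lt_of_le_of_ne hLge (Ne.symm hne)
    have := hLle (2 / L) (by positivity)
    rw [inv_div] at this
    nlinarith
  have hinv0 : Tendsto (fun y => (Af μ y)⁻¹) atTop (𝓝 0) := hL0 ▸ hLlim
  have hAtop : Tendsto (Af μ) atTop atTop := by
    have h' : Tendsto (fun y => (Af μ y)⁻¹) atTop (𝓝[>] (0:ℝ)) := by
      apply tendsto_nhdsWithin_of_tendsto_nhds_of_eventually_within _ hinv0
      filter_upwards [eventually_ge_atTop x₀] with y hy
      exact inv_pos.2 (hpos y hy)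
    have h'' := h'.inv_tendsto_nhdsGT_zero
    apply h''.congr'
    filter_upwards with y
    simp
  refine ⟨?_, hAtop⟩
  filter_upwards [eventually_ge_atTop x₀] with x hx
  have h1 := htinv x hx
  have h2 := tendsto_nhds_unique h1 hinv0
  rw [one_div]
  linarith
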